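/- arXiv:1008.2261 — 2 statements merged into one kernel-verified Lean document; each statement's English description precedes it below -/
import Mathlib

section
/- Let Σ be a connected graph, G ≤ Aut(Σ), and s ≥ 1. If Σ is (G, t)-arc transitive with t = ⌈(s+1)/2⌉, then the subdivision graph S(Σ) is locally (G, s)-arc transitive, i.e., for every vertex α of S(Σ), the stabiliser G_α acts transitively on the set of i-arcs of S(Σ) with initial vertex α, for all 1 ≤ i ≤ s. -/
open SimpleGraph

/-- The subdivision graph of a simple graph `S`: vertex set `V ⊕ E(S)`,
with `x ∈ V` adjacent to `e ∈ E(S)` iff `x ∈ e`. -/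
def subdiv {V : Type*} (S : SimpleGraph V) : SimpleGraph (V ⊕ S.edgeSet) where
  Adj a b :=
    (∃ (x : V) (e : S.edgeSet), a = Sum.inl x ∧ b = Sum.inr e ∧ x ∈ (e : Sym2 V)) ∨
    (∃ (x : V) (e : S.edgeSet), b = Sum.inl x ∧ a = Sum.inr e ∧ x ∈ (e : Sym2 V))
  symm := ⟨fun a b h => h.elim (fun ⟨x, e, h1, h2, h3⟩ => Or.inr ⟨x, e, h1, h2, h3⟩)
    (fun ⟨x, e, h1, h2, h3⟩ => Or.inl ⟨x, e, h1, h2, h3⟩)⟩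
  loopless := ⟨by
    rintro a (⟨x, e, h1, h2, _⟩ | ⟨x, e, h1, h2, _⟩) <;> rw [h1] at h2 <;>
      cases h2⟩

/-- `G` acts on `V` by automorphisms of the graph `S`. -/
def IsGraphAction {V : Type*} (S : SimpleGraph V) (G : Type*) [Group G] [MulAction G V] : Prop :=
  ∀ (g : G) (u v : V), S.Adj (g • u) (g • v) ↔ S.Adj u v

/-- The induced action of `g` on the edge set of `S`. -/
def emap {V : Type*} {S : SimpleGraph V} {G : Type*} [Group G] [MulAction G V]
    (hA : IsGraphAction S G) (g : G) (e : S.edgeSet) : S.edgeSet :=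
  ⟨Sym2.map (g • ·) e.1, by
    obtain ⟨e, he⟩ := e
    induction e with
    | _ u v =>
      rw [Sym2.map_pair_eq]
      exact (S.mem_edgeSet).mpr ((hA g u v).mpr ((S.mem_edgeSet).mp he))⟩

/-- The induced action of `g` on the vertices of the subdivision graph of `S`. -/
def smap {V : Type*} {S : SimpleGraph V} {G : Type*} [Group G] [MulAction G V]
    (hA : IsGraphAction S G) (g : G) : V ⊕ S.edgeSet → V ⊕ S.edgeSet :=
  Sum.map (g • ·) (emap hA g)

/-- `p` encodes an `n`-arc of `S` (only values `p 0, …, p n` are relevant). -/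
def IsNArc {V : Type*} (S : SimpleGraph V) (n : ℕ) (p : ℕ → V) : Prop :=
  (∀ i < n, S.Adj (p i) (p (i + 1))) ∧ ∀ j, 1 ≤ j → j + 1 ≤ n → p (j - 1) ≠ p (j + 1)

lemma subdiv_adj {V : Type*} (S : SimpleGraph V) (a b : V ⊕ S.edgeSet) :
    (subdiv S).Adj a b ↔
    (∃ (x : V) (e : S.edgeSet), a = Sum.inl x ∧ b = Sum.inr e ∧ x ∈ (e : Sym2 V)) ∨
    (∃ (x : V) (e : S.edgeSet), b = Sum.inl x ∧ a = Sum.inr e ∧ x ∈ (e : Sym2 V)) := Iff.rfl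

lemma isNArc_mono {V : Type*} {S : SimpleGraph V} {n m : ℕ} {p : ℕ → V}
    (h : IsNArc S n p) (hmn : m ≤ n) : IsNArc S m p :=
  ⟨fun i hi => h.1 i (lt_of_lt_of_le hi hmn), fun j h1 h2 => h.2 j h1 (le_trans h2 hmn)⟩

lemma sym2_cancel {V : Type*} {a b c : V} (h : s(a, b) = s(b, c)) : a = c := by
  rcases Sym2.eq_iff.mp h with ⟨h1, h2⟩ | ⟨h1, _⟩
  · exact h1.trans h2
  · exact h1

/-- decoding of an arc in the subdivision graph starting at a vertex `inl x` -/
lemma decode_inl {V : Type*} {S : SimpleGraph V} (i : ℕ) (p : ℕ → V ⊕ S.edgeSet) (x : V)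
    (hp : IsNArc (subdiv S) i p) (h0 : p 0 = Sum.inl x) :
    ∃ P : ℕ → V, IsNArc S ((i + 1) / 2) P ∧
      (∀ k, 2 * k ≤ i → p (2 * k) = Sum.inl (P k)) ∧
      (∀ k, 2 * k + 1 ≤ i →
        ∃ e : S.edgeSet, p (2 * k + 1) = Sum.inr e ∧ (e : Sym2 V) = s(P k, P (k + 1))) := by
  induction i with
  | zero =>
    refine ⟨fun _ => x, ⟨fun i hi => absurd hi (by omega), fun j h1 h2 => absurd h2 (by omega)⟩,
      fun k hk => ?_, fun k hk => absurd hk (by omega)⟩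
    have : k = 0 := by omega
    subst this; simpa using h0
  | succ i IH =>
    obtain ⟨P, hP, hv, he⟩ := IH (isNArc_mono hp (Nat.le_succ i))
    obtain ⟨k, hk | hk⟩ : ∃ k, i = 2 * k ∨ i = 2 * k + 1 := ⟨i / 2, by omega⟩
    · -- new position i+1 = 2k+1, an edge position
      subst hk
      have hadj := hp.1 (2 * k) (by omega)
      have hpk : p (2 * k) = Sum.inl (P k) := hv k le_rfl
      rw [subdiv_adj] at hadj
      rcases hadj with ⟨u, e, h1, h2, h3⟩ | ⟨u, e, h1, h2, h3⟩
      · rw [hpk] at h1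
        have hu : u = P k := by simpa using h1.symm
        subst hu
        obtain ⟨w, hw⟩ := Sym2.mem_iff_exists.mp h3
        have hadjS : S.Adj (P k) w := S.mem_edgeSet.mp (hw ▸ e.2)
        refine ⟨Function.update P (k + 1) w, ?_, ?_, ?_⟩
        · have hm : (2 * k + 1 + 1) / 2 = k + 1 := by omega
          rw [hm]
          constructor
          · intro a ha
            rcases Nat.lt_or_ge a k with h | h
            · have e1 : Function.update P (k + 1) w a = P a :=
                Function.update_of_ne (by omega) _ _
              have e2 : Function.update P (k + 1) w (a + 1) = P (a + 1) :=
                Function.update_of_ne (by omega) _ _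
              rw [e1, e2]
              exact hP.1 a (by omega)
            · have ha' : a = k := by omega
              subst ha'
              rw [Function.update_of_ne (by omega), Function.update_self]
              exact hadjS
          · intro j h1j h2j
            rcases Nat.lt_or_ge j k with h | h
            · have e1 : Function.update P (k + 1) w (j - 1) = P (j - 1) :=
                Function.update_of_ne (by omega) _ _
              have e2 : Function.update P (k + 1) w (j + 1) = P (j + 1) :=
                Function.update_of_ne (by omega) _ _
              rw [e1, e2]
              exact hP.2 j h1j (by omega)
            · have hj : j = k := by omega
              subst hj
              rw [Function.update_of_ne (by omega), Function.update_self]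
              -- need P (j-1) ≠ w, j ≥ 1
              have hnb := hp.2 (2 * j) (by omega) (by omega)
              obtain ⟨e', he', hee'⟩ := he (j - 1) (by omega)
              have hidx : 2 * (j - 1) + 1 = 2 * j - 1 := by omega
              have hidx2 : j - 1 + 1 = j := by omega
              rw [hidx] at he'
              rw [hidx2] at hee'
              intro hcon
              apply hnb
              rw [he', h2]
              congr 1
              apply Subtype.ext
              rw [hee', hw, ← hcon, Sym2.eq_swap]
        · intro a ha
          have ha' : a ≤ k := by omega
          rw [Function.update_of_ne (by omega : a ≠ k + 1)]
          exact hv a (by omega)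
        · intro a ha
          rcases Nat.lt_or_ge a k with h | h
          · obtain ⟨e', he', hee'⟩ := he a (by omega)
            refine ⟨e', he', ?_⟩
            rw [Function.update_of_ne (by omega : a ≠ k + 1),
              Function.update_of_ne (by omega : a + 1 ≠ k + 1)]
            exact hee'
          · have ha' : a = k := by omega
            subst ha'
            refine ⟨e, h2, ?_⟩
            rw [Function.update_of_ne (by omega : a ≠ a + 1), Function.update_self, hw]
      · -- second disjunct impossible: p (2k) is inl
        rw [hpk] at h2
        exact absurd h2 (by simp)
    · -- i = 2k+1, new position i+1 = 2k+2, a vertex position; P unchanged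
      subst hk
      obtain ⟨e, hpe, hee⟩ := he k le_rfl
      have hadj := hp.1 (2 * k + 1) (by omega)
      rw [subdiv_adj] at hadj
      rcases hadj with ⟨u, e', h1, h2, h3⟩ | ⟨u, e', h1, h2, h3⟩
      · rw [hpe] at h1; exact absurd h1 (by simp)
      · rw [hpe] at h2
        have he' : e' = e := by simpa using h2.symm
        subst he'
        have hnb := hp.2 (2 * k + 1) (by omega) (by omega)
        have hpk : p (2 * k + 1 - 1) = Sum.inl (P k) := by
          have := hv k (by omega)
          simpa using this
        have hu : u = P (k + 1) := by
          rw [hee, Sym2.mem_iff] at h3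
          rcases h3 with h | h
          · exfalso
            apply hnb
            rw [hpk, h1, h]
          · exact h
        refine ⟨P, ?_, ?_, ?_⟩
        · have hm : (2 * k + 1 + 1 + 1) / 2 = (2 * k + 1 + 1) / 2 := by omega
          rw [hm]; exact hP
        · intro a ha
          rcases Nat.lt_or_ge a (k + 1) with h | h
          · exact hv a (by omega)
          · have ha' : a = k + 1 := by omega
            subst ha'
            rw [show 2 * (k + 1) = 2 * k + 1 + 1 by omega, h1, hu]
        · intro a ha
          exact he a (by omega)

/-- decoding of an arc in the subdivision graph starting at an edge `inr e` -/
lemma decode_inr {V : Type*} {S : SimpleGraph V} (i : ℕ) (p : ℕ → V ⊕ S.edgeSet) (e : S.edgeSet)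
    (hp : IsNArc (subdiv S) i p) (h0 : p 0 = Sum.inr e) :
    ∃ P : ℕ → V, IsNArc S (i / 2 + 1) P ∧ (e : Sym2 V) = s(P 0, P 1) ∧
      (∀ k, 2 * k + 1 ≤ i → p (2 * k + 1) = Sum.inl (P (k + 1))) ∧
      (∀ k, 1 ≤ k → 2 * k ≤ i →
        ∃ f : S.edgeSet, p (2 * k) = Sum.inr f ∧ (f : Sym2 V) = s(P k, P (k + 1))) := by
  induction i with
  | zero =>
    obtain ⟨val, hval⟩ := e
    induction val using Sym2.inductionOn with
    | _ u v =>
      have hadj : S.Adj u v := S.mem_edgeSet.mp hval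
      refine ⟨fun k => if k = 0 then u else v,
        ⟨fun a ha => ?_, fun j h1 h2 => absurd h2 (by omega)⟩, by simp, fun k hk => absurd hk
          (by omega), fun k hk1 hk2 => absurd hk2 (by omega)⟩
      have ha0 : a = 0 := by omega
      subst ha0
      simpa using hadj
  | succ i IH =>
    obtain ⟨P, hP, hPe, hv, he⟩ := IH (isNArc_mono hp (Nat.le_succ i))
    obtain ⟨k, hk | hk⟩ : ∃ k, i = 2 * k ∨ i = 2 * k + 1 := ⟨i / 2, by omega⟩
    · -- new position i+1 = 2k+1, a vertex position
      subst hk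
      have hf : ∃ f : S.edgeSet, p (2 * k) = Sum.inr f ∧ (f : Sym2 V) = s(P k, P (k + 1)) := by
        rcases Nat.eq_zero_or_pos k with hk0 | hk0
        · subst hk0
          exact ⟨e, by simpa using h0, hPe⟩
        · exact he k hk0 le_rfl
      obtain ⟨f, hpf, hfe⟩ := hf
      have hadj := hp.1 (2 * k) (by omega)
      rw [subdiv_adj] at hadj
      rcases hadj with ⟨u, e', h1, h2, h3⟩ | ⟨u, e', h1, h2, h3⟩
      · rw [hpf] at h1; exact absurd h1 (by simp)
      · rw [hpf] at h2
        have he' : e' = f := by simpa using h2.symm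
        subst he'
        rw [hfe, Sym2.mem_iff] at h3
        rcases Nat.eq_zero_or_pos k with hk0 | hk0
        · -- k = 0 : maybe need to flip P
          subst hk0
          have hne : P 0 ≠ P 1 := (hP.1 0 (by omega)).ne
          rcases h3 with hu | hu
          · -- u = P 0 : flip
            refine ⟨fun a => P (1 - a), ⟨fun a ha => ?_, fun j h1j h2j => absurd h2j
                (by omega)⟩, ?_, fun a ha => ?_, fun a ha1 ha2 => absurd ha2 (by omega)⟩
            · have ha0 : a = 0 := by omega
              subst ha0
              simpa using (hP.1 0 (by omega)).symm
            · rw [hPe]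
              simp
            · have ha0 : a = 0 := by omega
              subst ha0
              rw [h1, hu]
          · -- u = P 1 : keep
            refine ⟨P, by simpa using hP, hPe, fun a ha => ?_, fun a ha1 ha2 => absurd ha2 (by omega)⟩
            have ha0 : a = 0 := by omega
            subst ha0
            rw [h1, hu]
        · -- k ≥ 1
          have hnb := hp.2 (2 * k) (by omega) (by omega)
          have hvk : p (2 * k - 1) = Sum.inl (P k) := by
            have := hv (k - 1) (by omega)
            have hidx : 2 * (k - 1) + 1 = 2 * k - 1 := by omega
            have hidx2 : k - 1 + 1 = k := by omega
            rw [hidx, hidx2] at this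
            exact this
          have hu : u = P (k + 1) := by
            rcases h3 with hu | hu
            · exfalso; apply hnb; rw [hvk, h1, hu]
            · exact hu
          refine ⟨P, ?_, hPe, fun a ha => ?_, fun a ha1 ha2 => he a ha1 (by omega)⟩
          · have hm : (2 * k + 1) / 2 + 1 = 2 * k / 2 + 1 := by omega
            rw [hm]; exact hP
          · rcases Nat.lt_or_ge a k with h | h
            · exact hv a (by omega)
            · have ha' : a = k := by omega
              subst ha'
              rw [h1, hu]
    · -- i = 2k+1, new position i+1 = 2k+2, an edge position
      subst hk
      have hvk : p (2 * k + 1) = Sum.inl (P (k + 1)) := hv k le_rfl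
      have hadj := hp.1 (2 * k + 1) (by omega)
      rw [subdiv_adj] at hadj
      rcases hadj with ⟨u, f, h1, h2, h3⟩ | ⟨u, f, h1, h2, h3⟩
      · rw [hvk] at h1
        have hu : u = P (k + 1) := by simpa using h1.symm
        subst hu
        obtain ⟨w, hw⟩ := Sym2.mem_iff_exists.mp h3
        have hadjS : S.Adj (P (k + 1)) w := S.mem_edgeSet.mp (hw ▸ f.2)
        have hf' : ∃ f' : S.edgeSet, p (2 * k) = Sum.inr f' ∧
            (f' : Sym2 V) = s(P k, P (k + 1)) := by
          rcases Nat.eq_zero_or_pos k with hk0 | hk0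
          · subst hk0
            exact ⟨e, by simpa using h0, hPe⟩
          · exact he k hk0 (by omega)
        obtain ⟨f', hpf', hfe'⟩ := hf'
        have hnb := hp.2 (2 * k + 1) (by omega) (by omega)
        have hwP : w ≠ P k := by
          intro hcon
          apply hnb
          have hidx : 2 * k + 1 - 1 = 2 * k := by omega
          rw [hidx, hpf', h2]
          congr 1
          apply Subtype.ext
          rw [hfe', hw, hcon, Sym2.eq_swap]
        refine ⟨Function.update P (k + 2) w, ?_, ?_, fun a ha => ?_, fun a ha1 ha2 => ?_⟩
        · have hm : (2 * k + 1 + 1) / 2 + 1 = k + 2 := by omega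
          rw [hm]
          constructor
          · intro a ha
            rcases Nat.lt_or_ge a (k + 1) with h | h
            · rw [Function.update_of_ne (by omega), Function.update_of_ne (by omega)]
              exact hP.1 a (by omega)
            · have ha' : a = k + 1 := by omega
              subst ha'
              rw [Function.update_of_ne (by omega), Function.update_self]
              exact hadjS
          · intro j h1j h2j
            rcases Nat.lt_or_ge j (k + 1) with h | h
            · rw [Function.update_of_ne (by omega), Function.update_of_ne (by omega)]
              exact hP.2 j h1j (by omega)
            · have hj' : j = k + 1 := by omega
              subst hj'
              rw [Function.update_of_ne (by omega), Function.update_self]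
              exact fun hcon => hwP hcon.symm
        · rw [Function.update_of_ne (by omega), Function.update_of_ne (by omega)]
          exact hPe
        · rw [Function.update_of_ne (by omega : a + 1 ≠ k + 2)]
          exact hv a (by omega)
        · rcases Nat.lt_or_ge a (k + 1) with h | h
          · obtain ⟨f'', hf1, hf2⟩ := he a ha1 (by omega)
            refine ⟨f'', hf1, ?_⟩
            rw [Function.update_of_ne (by omega), Function.update_of_ne (by omega)]
            exact hf2
          · have ha' : a = k + 1 := by omega
            subst ha'
            refine ⟨f, by rw [show 2 * (k + 1) = 2 * k + 1 + 1 by omega]; exact h2, ?_⟩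
            rw [Function.update_of_ne (by omega), Function.update_self]
            exact hw
      · rw [hvk] at h2
        exact absurd h2 (by simp)

/-- If `S` is `(G, ⌈(s+1)/2⌉)`-arc transitive, then the subdivision graph of `S` is
locally `(G, s)`-arc transitive. -/
theorem stmt_10 {V : Type*} {G : Type*} [Group G] [MulAction G V] (S : SimpleGraph V)
    (hconn : S.Connected) (hA : IsGraphAction S G) (s : ℕ) (hs : 1 ≤ s)
    (htrans : ∀ i, 1 ≤ i → i ≤ (s + 2) / 2 → ∀ p q : ℕ → V,
      IsNArc S i p → IsNArc S i q → ∃ g : G, ∀ k ≤ i, g • p k = q k)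
    (hex : ∃ p : ℕ → V, IsNArc S ((s + 2) / 2) p) :
    (∀ (α : V ⊕ S.edgeSet) (i : ℕ), 1 ≤ i → i ≤ s →
      ∀ p q : ℕ → V ⊕ S.edgeSet, IsNArc (subdiv S) i p → IsNArc (subdiv S) i q →
        p 0 = α → q 0 = α → ∃ g : G, ∀ k ≤ i, smap hA g (p k) = q k) ∧
    ∃ p : ℕ → V ⊕ S.edgeSet, IsNArc (subdiv S) s p := by
  constructor
  · intro α i hi1 his p q hp hq hp0 hq0
    cases α with
    | inl x =>
      obtain ⟨P, hP, hv, he⟩ := decode_inl i p x hp hp0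
      obtain ⟨Q, hQ, hv', he'⟩ := decode_inl i q x hq hq0
      obtain ⟨g, hg⟩ := htrans ((i + 1) / 2) (by omega) (by omega) P Q hP hQ
      refine ⟨g, fun k hk => ?_⟩
      obtain ⟨a, ha | ha⟩ : ∃ a, k = 2 * a ∨ k = 2 * a + 1 := ⟨k / 2, by omega⟩
      · subst ha
        rw [hv a (by omega), hv' a (by omega)]
        show Sum.inl (g • P a) = Sum.inl (Q a)
        rw [hg a (by omega)]
      · subst ha
        obtain ⟨e, hpe, hee⟩ := he a (by omega)
        obtain ⟨e', hqe, hee'⟩ := he' a (by omega)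
        rw [hpe, hqe]
        show Sum.inr (emap hA g e) = Sum.inr e'
        congr 1
        apply Subtype.ext
        show Sym2.map (g • ·) (e : Sym2 V) = (e' : Sym2 V)
        rw [hee, hee', Sym2.map_pair_eq, hg a (by omega), hg (a + 1) (by omega)]
    | inr e =>
      obtain ⟨P, hP, hPe, hv, he⟩ := decode_inr i p e hp hp0
      obtain ⟨Q, hQ, hQe, hv', he'⟩ := decode_inr i q e hq hq0
      obtain ⟨g, hg⟩ := htrans (i / 2 + 1) (by omega) (by omega) P Q hP hQ
      refine ⟨g, fun k hk => ?_⟩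
      have hemap : ∀ (f f' : S.edgeSet) (a : ℕ), a + 1 ≤ i / 2 + 1 →
          (f : Sym2 V) = s(P a, P (a + 1)) → (f' : Sym2 V) = s(Q a, Q (a + 1)) →
          emap hA g f = f' := by
        intro f f' a ha hf hf'
        apply Subtype.ext
        show Sym2.map (g • ·) (f : Sym2 V) = (f' : Sym2 V)
        rw [hf, hf', Sym2.map_pair_eq, hg a (by omega), hg (a + 1) (by omega)]
      obtain ⟨a, ha | ha | ha⟩ : ∃ a, k = 0 ∨ k = 2 * a + 1 ∨ (k = 2 * a ∧ 1 ≤ a) :=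
        ⟨k / 2, by omega⟩
      · subst ha
        rw [hp0, hq0]
        show Sum.inr (emap hA g e) = Sum.inr e
        rw [hemap e e 0 (by omega) hPe hQe]
      · subst ha
        rw [hv a (by omega), hv' a (by omega)]
        show Sum.inl (g • P (a + 1)) = Sum.inl (Q (a + 1))
        rw [hg (a + 1) (by omega)]
      · obtain ⟨ha, ha1⟩ := ha
        subst ha
        obtain ⟨f, hpf, hfe⟩ := he a ha1 (by omega)
        obtain ⟨f', hqf, hfe'⟩ := he' a ha1 (by omega)
        rw [hpf, hqf]
        show Sum.inr (emap hA g f) = Sum.inr f'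
        rw [hemap f f' a (by omega) hfe hfe']
  · obtain ⟨P, hP⟩ := hex
    have hedge : ∀ a : ℕ, a < (s + 2) / 2 → s(P a, P (a + 1)) ∈ S.edgeSet :=
      fun a ha => S.mem_edgeSet.mpr (hP.1 a ha)
    refine ⟨fun k => if k % 2 = 0 then Sum.inl (P (k / 2))
      else Sum.inr ⟨s(P (min (k / 2) ((s + 2) / 2 - 1)),
        P (min (k / 2) ((s + 2) / 2 - 1) + 1)), hedge _ (by omega)⟩, ?_, ?_⟩
    · intro j hj
      obtain ⟨a, ha | ha⟩ : ∃ a, j = 2 * a ∨ j = 2 * a + 1 := ⟨j / 2, by omega⟩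
      · subst ha
        simp only
        rw [if_pos (by omega : 2 * a % 2 = 0), if_neg (by omega : ¬(2 * a + 1) % 2 = 0)]
        rw [subdiv_adj]
        left
        refine ⟨P (2 * a / 2), _, rfl, rfl, ?_⟩
        rw [Sym2.mem_iff]
        left
        rw [(by omega : 2 * a / 2 = a),
          (by omega : min ((2 * a + 1) / 2) ((s + 2) / 2 - 1) = a)]
      · subst ha
        simp only
        rw [if_neg (by omega : ¬(2 * a + 1) % 2 = 0), if_pos (by omega : (2 * a + 1 + 1) % 2 = 0)]
        rw [subdiv_adj]
        right
        refine ⟨P ((2 * a + 1 + 1) / 2), _, rfl, rfl, ?_⟩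
        rw [Sym2.mem_iff]
        right
        rw [(by omega : (2 * a + 1 + 1) / 2 = a + 1),
          (by omega : min ((2 * a + 1) / 2) ((s + 2) / 2 - 1) = a)]
    · intro j hj1 hj2
      obtain ⟨a, ha | ha⟩ : ∃ a, (j = 2 * a ∧ 1 ≤ a) ∨ j = 2 * a + 1 := ⟨j / 2, by omega⟩
      · obtain ⟨ha, ha1⟩ := ha
        subst ha
        simp only
        rw [(by omega : 2 * a - 1 = 2 * (a - 1) + 1),
          if_neg (by omega : ¬(2 * (a - 1) + 1) % 2 = 0),
          if_neg (by omega : ¬(2 * a + 1) % 2 = 0)]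
        intro hcon
        have h2 := Sum.inr_injective hcon
        have hval := congrArg Subtype.val h2
        simp only at hval
        rw [(by omega : min ((2 * (a - 1) + 1) / 2) ((s + 2) / 2 - 1) = a - 1),
          (by omega : min ((2 * a + 1) / 2) ((s + 2) / 2 - 1) = a),
          (by omega : a - 1 + 1 = a)] at hval
        exact hP.2 a ha1 (by omega) (sym2_cancel hval)
      · subst ha
        simp only
        rw [(by omega : 2 * a + 1 - 1 = 2 * a), if_pos (by omega : 2 * a % 2 = 0),
          if_pos (by omega : (2 * a + 1 + 1) % 2 = 0), (by omega : 2 * a / 2 = a),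
          (by omega : (2 * a + 1 + 1) / 2 = a + 1)]
        intro hcon
        have : P a = P (a + 1) := by simpa using hcon
        exact (hP.1 a (by omega)).ne this
end

section
/- Let Σ be a connected graph of diameter d ≥ 2 with at least two vertices, G ≤ Aut(Σ), and suppose the subdivision graph Γ = S(Σ) is locally (G, 2t)-distance transitive where 2t ≤ 2d − 1. Then the girth of Σ is at least 2t + 2. -/
open SimpleGraph

section Generic
variable {V : Type*} {S : SimpleGraph V}

lemma isPath_loop_eq {v : V} (p : S.Walk v v) (hp : p.IsPath) : p = Walk.nil := by
  cases p with
  | nil => rfl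
  | cons h q =>
    rw [SimpleGraph.Walk.cons_isPath_iff] at hp
    exact absurd q.end_mem_support hp.2

lemma cycle_of_two_paths_aux : ∀ (n : ℕ) {u v : V} (p q : S.Walk u v), p.IsPath → q.IsPath →
    p ≠ q → p.length + q.length ≤ n →
    ∃ (a : V) (w : S.Walk a a), w.IsCycle ∧ w.length ≤ p.length + q.length := by
  intro n
  classical
  induction n with
  | zero =>
    intro u v p q hp hq hne hlen
    cases p with
    | nil =>
      exact absurd ((isPath_loop_eq q hq).symm) hne
    | cons h p' => simp at hlen
  | succ n ih =>
    intro u v p q hp hq hne hlen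
    cases p with
    | nil =>
      exact absurd ((isPath_loop_eq q hq).symm) hne
    | cons h p' =>
      cases q with
      | nil =>
        exact absurd (isPath_loop_eq _ hp) hne
      | cons h' q' =>
        rename_i x y
        by_cases hxy : x = y
        · subst hxy
          have hpq : p' ≠ q' := by
            rintro rfl
            exact hne rfl
          obtain ⟨a, w, hw, hwl⟩ := ih p' q' hp.of_cons hq.of_cons hpq (by
            simp only [Walk.length_cons] at hlen; omega)
          exact ⟨a, w, hw, by simp only [Walk.length_cons]; omega⟩
        · have hup' : u ∉ p'.support := ((Walk.cons_isPath_iff _ _).mp hp).2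
          have huq' : u ∉ q'.support := ((Walk.cons_isPath_iff _ _).mp hq).2
          set W := p'.append q'.reverse with hW
          have hUW : u ∉ W.support := by
            intro hu
            rcases (Walk.mem_support_append_iff _ _).mp hu with h1 | h1
            · exact hup' h1
            · rw [Walk.support_reverse] at h1
              exact huq' (List.mem_reverse.mp h1)
          set P := W.bypass with hP
          have hPpath : P.IsPath := W.bypass_isPath
          have hUP : u ∉ P.support := fun hm => hUW (W.support_bypass_subset hm)
          refine ⟨u, Walk.cons h (P.concat h'.symm), ?_, ?_⟩
          · constructor
            · constructor
              · constructor
                rw [Walk.edges_cons, Walk.edges_concat]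
                simp only [List.concat_eq_append]
                refine List.nodup_cons.mpr ⟨?_, ?_⟩
                · intro hmem
                  rcases List.mem_append.mp hmem with h1 | h1
                  · exact hUP (P.fst_mem_support_of_mem_edges h1)
                  · simp only [List.mem_singleton] at h1
                    rcases Sym2.eq_iff.mp h1 with ⟨hq1, hq2⟩ | ⟨-, hq2⟩
                    · exact h.ne hq2.symm
                    · exact hxy hq2
                · refine List.Nodup.append hPpath.edges_nodup (List.nodup_singleton _) ?_
                  intro e he1 he2
                  simp only [List.mem_singleton] at he2
                  subst he2
                  exact hUP (P.snd_mem_support_of_mem_edges he1)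
              · simp
            · rw [Walk.support_cons, List.tail_cons, Walk.support_concat]
              refine List.Nodup.append hPpath.support_nodup (List.nodup_singleton _) ?_
              intro z hz1 hz2
              simp only [List.mem_singleton] at hz2
              subst hz2
              exact hUP hz1
          · have hPle : P.length ≤ W.length := W.length_bypass_le
            have hWlen : W.length = p'.length + q'.length := by
              rw [hW, Walk.length_append, Walk.length_reverse]
            simp only [Walk.length_cons, Walk.length_concat]
            omega

lemma cycle_of_two_paths {u v : V} (p q : S.Walk u v) (hp : p.IsPath) (hq : q.IsPath)
    (hne : p ≠ q) :
    ∃ (a : V) (w : S.Walk a a), w.IsCycle ∧ w.length ≤ p.length + q.length :=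
  cycle_of_two_paths_aux (p.length + q.length) p q hp hq hne le_rfl

lemma chain_walk_support (x : ℕ → V) :
    ∀ (n : ℕ), (∀ i < n, S.Adj (x i) (x (i+1))) →
    ∃ w : S.Walk (x 0) (x n), w.length = n ∧ w.support = (List.range (n+1)).map x := by
  intro n
  induction n with
  | zero => exact fun _ => ⟨Walk.nil, rfl, by simp [List.range_succ]⟩
  | succ n ih =>
    intro h
    obtain ⟨w, hl, hs⟩ := ih (fun i hi => h i (by omega))
    refine ⟨w.concat (h n (by omega)), by simp [Walk.length_concat, hl], ?_⟩
    rw [Walk.support_concat, hs]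
    simp [List.range_succ, List.concat_eq_append]

lemma chain_path (x : ℕ → V) (n : ℕ) (h : ∀ i < n, S.Adj (x i) (x (i+1)))
    (hinj : ∀ i j, i ≤ n → j ≤ n → x i = x j → i = j) :
    ∃ w : S.Walk (x 0) (x n), w.IsPath ∧ w.length = n ∧
      (∀ z, z ∈ w.support ↔ ∃ i, i ≤ n ∧ x i = z) := by
  obtain ⟨w, hl, hs⟩ := chain_walk_support x n h
  refine ⟨w, Walk.IsPath.mk' ?_, hl, ?_⟩
  · rw [hs]
    refine List.Nodup.map_on ?_ List.nodup_range
    intro i hi j hj hij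
    exact hinj i j (by simpa using Nat.lt_succ_iff.mp (List.mem_range.mp hi))
      (by simpa using Nat.lt_succ_iff.mp (List.mem_range.mp hj)) hij
  · intro z
    rw [hs]
    simp only [List.mem_map, List.mem_range, Nat.lt_succ_iff]

lemma chain_dist (x : ℕ → V) (n : ℕ) (h : ∀ i < n, S.Adj (x i) (x (i+1))) :
    S.dist (x 0) (x n) ≤ n := by
  obtain ⟨w, hl, _⟩ := chain_walk_support x n h
  simpa [hl] using S.dist_le w

lemma support_eq_getVert : ∀ {a b : V} (w : S.Walk a b),
    w.support = (List.range (w.length+1)).map w.getVert := by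
  intro a b w
  induction w with
  | nil => simp [Walk.support_nil, List.range_succ]
  | cons h w ih =>
    rw [Walk.support_cons, ih]
    conv_rhs => rw [Walk.length_cons, List.range_succ_eq_map, List.map_cons, List.map_map]
    congr 1

end Generic

section Subdiv
variable {V : Type*} {S : SimpleGraph V}

lemma subdiv_adj_inl_inr {x : V} {e : S.edgeSet} :
    (subdiv S).Adj (Sum.inl x) (Sum.inr e) ↔ x ∈ (e : Sym2 V) := by
  constructor
  · rintro (⟨a, f, h1, h2, h3⟩ | ⟨a, f, h1, h2, h3⟩)
    · obtain rfl : x = a := Sum.inl.inj h1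
      obtain rfl : e = f := Sum.inr.inj h2
      exact h3
    · exact absurd h2 (by simp)
  · intro h
    exact Or.inl ⟨x, e, rfl, rfl, h⟩

lemma subdiv_adj_inl {x : V} {b : V ⊕ S.edgeSet} (h : (subdiv S).Adj (Sum.inl x) b) :
    ∃ e : S.edgeSet, b = Sum.inr e ∧ x ∈ (e : Sym2 V) := by
  rcases h with ⟨a, f, h1, h2, h3⟩ | ⟨a, f, h1, h2, h3⟩
  · obtain rfl : x = a := Sum.inl.inj h1
    exact ⟨f, h2, h3⟩
  · exact absurd h2 (by simp)

lemma subdiv_adj_inr {e : S.edgeSet} {b : V ⊕ S.edgeSet} (h : (subdiv S).Adj (Sum.inr e) b) :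
    ∃ x : V, b = Sum.inl x ∧ x ∈ (e : Sym2 V) := by
  rcases h with ⟨a, f, h1, h2, h3⟩ | ⟨a, f, h1, h2, h3⟩
  · exact absurd h1 (by simp)
  · obtain rfl : e = f := Sum.inr.inj h2
    exact ⟨a, h1, h3⟩

lemma edge_endpoints (e : S.edgeSet) :
    ∃ (u v : V) (h : S.Adj u v), e = ⟨s(u,v), (S.mem_edgeSet).mpr h⟩ := by
  obtain ⟨es, he⟩ := e
  induction es with
  | _ u v =>
    exact ⟨u, v, (S.mem_edgeSet).mp he, rfl⟩

lemma exists_double_walk {a b : V} (q : S.Walk a b) :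
    ∃ p : (subdiv S).Walk (Sum.inl a) (Sum.inl b), p.length = 2 * q.length := by
  induction q with
  | nil => exact ⟨Walk.nil, by simp⟩
  | cons h q ih =>
    rename_i u1 c1 d1
    obtain ⟨p, hp⟩ := ih
    have h1 : (subdiv S).Adj (Sum.inl u1) (Sum.inr ⟨s(u1,c1), (S.mem_edgeSet).mpr h⟩) :=
      subdiv_adj_inl_inr.mpr (by simp)
    have h2 : (subdiv S).Adj (Sum.inr (⟨s(u1,c1), (S.mem_edgeSet).mpr h⟩ : S.edgeSet))
        (Sum.inl c1) :=
      ((subdiv S).adj_symm (subdiv_adj_inl_inr.mpr (by simp)))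
    exact ⟨Walk.cons h1 (Walk.cons h2 p), by simp only [Walk.length_cons, hp]; omega⟩

lemma mem_edge_cases {u v x : V} {h : S.Adj u v}
    (hx : x ∈ ((⟨s(u,v), (S.mem_edgeSet).mpr h⟩ : S.edgeSet) : Sym2 V)) : x = u ∨ x = v := by
  simpa using hx

/-- two vertices in a common edge are at distance ≤ 1 -/
lemma dist_le_one_of_mem {e : S.edgeSet} {a b : V} (ha : a ∈ (e : Sym2 V))
    (hb : b ∈ (e : Sym2 V)) : S.dist a b ≤ 1 := by
  by_cases hab : a = b
  · subst hab
    simp [SimpleGraph.dist_self]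
  · have hadj : S.Adj a b := by
      have := (Sym2.mem_and_mem_iff hab).mp ⟨ha, hb⟩
      have he := e.2
      rw [this] at he
      exact (S.mem_edgeSet).mp he
    exact le_of_eq ((SimpleGraph.dist_eq_one_iff_adj).mpr hadj)

lemma dist_le_of_walk_inl (hc : S.Connected) :
    ∀ (n : ℕ) {a b : V} (p : (subdiv S).Walk (Sum.inl a) (Sum.inl b)),
    p.length ≤ n → 2 * S.dist a b ≤ p.length := by
  intro n
  induction n with
  | zero =>
    intro a b p hp
    have : p.length = 0 := Nat.le_zero.mp hp
    have hab : a = b := by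
      have := Walk.eq_of_length_eq_zero this
      exact Sum.inl.inj this
    subst hab
    simp [SimpleGraph.dist_self]
  | succ n ih =>
    intro a b p hp
    cases p with
    | nil => simp [SimpleGraph.dist_self]
    | cons h p' =>
      obtain ⟨e, rfl, hae⟩ := subdiv_adj_inl h
      cases p' with
      | cons h2 p'' =>
        obtain ⟨a2, rfl, ha2e⟩ := subdiv_adj_inr h2
        have key : 2 * S.dist a2 b ≤ p''.length := by
          apply ih
          simp only [Walk.length_cons] at hp
          omega
        have htri : S.dist a b ≤ 1 + S.dist a2 b :=
          le_trans (hc.dist_triangle (v := a2)) (by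
            have := dist_le_one_of_mem hae ha2e
            omega)
        simp only [Walk.length_cons]
        omega

lemma subdiv_dist_inl_inl (hc : S.Connected) (a b : V) :
    (subdiv S).dist (Sum.inl a) (Sum.inl b) = 2 * S.dist a b := by
  obtain ⟨q, hq⟩ := hc.exists_walk_length_eq_dist a b
  obtain ⟨p, hp⟩ := exists_double_walk q
  have hreach : (subdiv S).Reachable (Sum.inl a) (Sum.inl b) := ⟨p⟩
  apply le_antisymm
  · calc (subdiv S).dist (Sum.inl a) (Sum.inl b) ≤ p.length := SimpleGraph.dist_le p
      _ = 2 * S.dist a b := by rw [hp, hq]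
  · obtain ⟨P, hP⟩ := hreach.exists_walk_length_eq_dist
    rw [← hP]
    exact dist_le_of_walk_inl hc P.length P le_rfl

lemma subdiv_dist_inr_inl (hc : S.Connected) {u v : V} (h : S.Adj u v) (y : V) :
    (subdiv S).dist (Sum.inr ⟨s(u,v), (S.mem_edgeSet).mpr h⟩) (Sum.inl y) =
      2 * min (S.dist u y) (S.dist v y) + 1 := by
  set e : S.edgeSet := ⟨s(u,v), (S.mem_edgeSet).mpr h⟩ with he
  have hadj_u : (subdiv S).Adj (Sum.inr e) (Sum.inl u) :=
    ((subdiv S).adj_symm (subdiv_adj_inl_inr.mpr (by rw [he]; simp)))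
  have hadj_v : (subdiv S).Adj (Sum.inr e) (Sum.inl v) :=
    ((subdiv S).adj_symm (subdiv_adj_inl_inr.mpr (by rw [he]; simp)))
  -- upper bounds
  have hub : ∀ (w : V), (subdiv S).Adj (Sum.inr e) (Sum.inl w) →
      (subdiv S).dist (Sum.inr e) (Sum.inl y) ≤ 2 * S.dist w y + 1 := by
    intro w hw
    obtain ⟨q, hq⟩ := hc.exists_walk_length_eq_dist w y
    obtain ⟨p, hp⟩ := exists_double_walk q
    calc (subdiv S).dist (Sum.inr e) (Sum.inl y) ≤ (Walk.cons hw p).length :=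
          SimpleGraph.dist_le _
      _ = 2 * S.dist w y + 1 := by simp only [Walk.length_cons, hp, hq]
  have hreach : (subdiv S).Reachable (Sum.inr e) (Sum.inl y) := by
    obtain ⟨q, _⟩ := hc.exists_walk_length_eq_dist u y
    obtain ⟨p, _⟩ := exists_double_walk q
    exact ⟨Walk.cons hadj_u p⟩
  apply le_antisymm
  · rcases le_total (S.dist u y) (S.dist v y) with hle | hle
    · rw [min_eq_left hle]; exact hub u hadj_u
    · rw [min_eq_right hle]; exact hub v hadj_v
  · obtain ⟨P, hP⟩ := hreach.exists_walk_length_eq_dist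
    rw [← hP]
    cases P with
    | cons h1 P' =>
      obtain ⟨w, rfl, hw⟩ := subdiv_adj_inr h1
      have hw2 : w = u ∨ w = v := by
        rw [he] at hw; simpa using hw
      have hlb : 2 * S.dist w y ≤ P'.length := dist_le_of_walk_inl hc P'.length P' le_rfl
      have : min (S.dist u y) (S.dist v y) ≤ S.dist w y := by
        rcases hw2 with rfl | rfl
        · exact min_le_left _ _
        · exact min_le_right _ _
      simp only [Walk.length_cons]
      omega

lemma walk_from_inr_cases {A : V ⊕ S.edgeSet} {e : S.edgeSet}
    (P : (subdiv S).Walk (Sum.inr e) A) (hne : A ≠ Sum.inr e) :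
    ∃ (w : V) (P' : (subdiv S).Walk (Sum.inl w) A),
      w ∈ (e : Sym2 V) ∧ P.length = P'.length + 1 := by
  cases P with
  | nil => exact absurd rfl hne
  | cons h1 P' =>
    obtain ⟨w, hw1, hw⟩ := subdiv_adj_inr h1
    subst hw1
    exact ⟨w, P', hw, by simp [Walk.length_cons]⟩

lemma subdiv_dist_inr_inr (hc : S.Connected) {e : S.edgeSet} {p q : V} (h : S.Adj p q)
    (hne : e ≠ ⟨s(p,q), (S.mem_edgeSet).mpr h⟩) :
    (subdiv S).dist (Sum.inr e) (Sum.inr ⟨s(p,q), (S.mem_edgeSet).mpr h⟩) =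
      1 + min ((subdiv S).dist (Sum.inr e) (Sum.inl p))
        ((subdiv S).dist (Sum.inr e) (Sum.inl q)) := by
  set f : S.edgeSet := ⟨s(p,q), (S.mem_edgeSet).mpr h⟩ with hf
  obtain ⟨u, v, huv, rfl⟩ := edge_endpoints e
  have hadj_p : (subdiv S).Adj (Sum.inl p) (Sum.inr f) := subdiv_adj_inl_inr.mpr (by
    rw [hf]; simp)
  have hadj_q : (subdiv S).Adj (Sum.inl q) (Sum.inr f) := subdiv_adj_inl_inr.mpr (by
    rw [hf]; simp)
  have hreach : ∀ z : V, (subdiv S).Reachable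
      (Sum.inr (⟨s(u,v), (S.mem_edgeSet).mpr huv⟩ : S.edgeSet)) (Sum.inl z) := by
    intro z
    obtain ⟨qq, _⟩ := hc.exists_walk_length_eq_dist u z
    obtain ⟨pp, _⟩ := exists_double_walk qq
    exact ⟨Walk.cons ((subdiv S).adj_symm (subdiv_adj_inl_inr.mpr (by simp))) pp⟩
  have hub : ∀ z : V, (subdiv S).Adj (Sum.inl z) (Sum.inr f) →
      (subdiv S).dist (Sum.inr ⟨s(u,v), (S.mem_edgeSet).mpr huv⟩) (Sum.inr f) ≤
        (subdiv S).dist (Sum.inr ⟨s(u,v), (S.mem_edgeSet).mpr huv⟩) (Sum.inl z) + 1 := by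
    intro z hz
    obtain ⟨P, hP⟩ := (hreach z).exists_walk_length_eq_dist
    calc (subdiv S).dist _ (Sum.inr f) ≤ (P.concat hz).length := SimpleGraph.dist_le _
      _ = _ + 1 := by rw [Walk.length_concat, hP]
  apply le_antisymm
  · rcases le_total ((subdiv S).dist (Sum.inr ⟨s(u,v), (S.mem_edgeSet).mpr huv⟩) (Sum.inl p))
      ((subdiv S).dist (Sum.inr ⟨s(u,v), (S.mem_edgeSet).mpr huv⟩) (Sum.inl q)) with hle | hle
    · rw [min_eq_left hle, add_comm]; exact hub p hadj_p
    · rw [min_eq_right hle, add_comm]; exact hub q hadj_q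
  · have hreach2 : (subdiv S).Reachable (Sum.inr ⟨s(u,v), (S.mem_edgeSet).mpr huv⟩)
        (Sum.inr f) := ((hreach p).trans ⟨Walk.cons hadj_p Walk.nil⟩)
    obtain ⟨P, hP⟩ := hreach2.exists_walk_length_eq_dist
    have hne2 : (Sum.inr (⟨s(u,v), (S.mem_edgeSet).mpr huv⟩ : S.edgeSet) : V ⊕ S.edgeSet) ≠
        Sum.inr f := fun hcon => hne (Sum.inr.inj hcon)
    obtain ⟨w, P', hw, hlen⟩ := walk_from_inr_cases P.reverse hne2
    have hw2 : w = p ∨ w = q := by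
      rw [hf] at hw; simpa using hw
    have hlb : (subdiv S).dist (Sum.inr ⟨s(u,v), (S.mem_edgeSet).mpr huv⟩) (Sum.inl w)
        ≤ P'.length := by
      rw [SimpleGraph.dist_comm]
      exact (SimpleGraph.dist_le P')
    have hmin : min ((subdiv S).dist (Sum.inr ⟨s(u,v), (S.mem_edgeSet).mpr huv⟩) (Sum.inl p))
        ((subdiv S).dist (Sum.inr ⟨s(u,v), (S.mem_edgeSet).mpr huv⟩) (Sum.inl q)) ≤
        (subdiv S).dist (Sum.inr ⟨s(u,v), (S.mem_edgeSet).mpr huv⟩) (Sum.inl w) := by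
      rcases hw2 with rfl | rfl
      · exact min_le_left _ _
      · exact min_le_right _ _
    have hPlen : P.length = P'.length + 1 := by
      rw [← Walk.length_reverse P]; exact hlen
    omega

end Subdiv

section Action
variable {V : Type*} {S : SimpleGraph V} {G : Type*} [Group G] [MulAction G V]

lemma emap_one (hA : IsGraphAction S G) (e : S.edgeSet) : emap hA 1 e = e := by
  apply Subtype.ext
  show Sym2.map ((1 : G) • ·) e.1 = e.1
  have : ((1 : G) • · : V → V) = id := funext fun x => one_smul G x
  rw [this, Sym2.map_id, id_eq]

lemma emap_mul (hA : IsGraphAction S G) (g h : G) (e : S.edgeSet) :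
    emap hA (g * h) e = emap hA g (emap hA h e) := by
  apply Subtype.ext
  show Sym2.map ((g * h) • ·) e.1 = Sym2.map (g • ·) (Sym2.map (h • ·) e.1)
  rw [Sym2.map_map]
  congr 1
  funext x
  simp [mul_smul]

lemma smap_one (hA : IsGraphAction S G) (z : V ⊕ S.edgeSet) : smap hA 1 z = z := by
  cases z with
  | inl x => simp [smap, one_smul]
  | inr e => simp [smap, emap_one]

lemma smap_mul (hA : IsGraphAction S G) (g h : G) (z : V ⊕ S.edgeSet) :
    smap hA (g * h) z = smap hA g (smap hA h z) := by
  cases z with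
  | inl x => simp [smap, mul_smul]
  | inr e => simp [smap, emap_mul]

lemma smap_cancel (hA : IsGraphAction S G) (g : G) (z : V ⊕ S.edgeSet) :
    smap hA g (smap hA g⁻¹ z) = z := by
  rw [← smap_mul, mul_inv_cancel, smap_one]

lemma smap_cancel' (hA : IsGraphAction S G) (g : G) (z : V ⊕ S.edgeSet) :
    smap hA g⁻¹ (smap hA g z) = z := by
  rw [← smap_mul, inv_mul_cancel, smap_one]

lemma smap_adj (hA : IsGraphAction S G) (g : G) {z w : V ⊕ S.edgeSet}
    (h : (subdiv S).Adj z w) : (subdiv S).Adj (smap hA g z) (smap hA g w) := by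
  rcases h with ⟨x, e, rfl, rfl, hm⟩ | ⟨x, e, rfl, rfl, hm⟩
  · exact Or.inl ⟨g • x, emap hA g e, rfl, rfl, Sym2.mem_map.mpr ⟨x, hm, rfl⟩⟩
  · exact Or.inr ⟨g • x, emap hA g e, rfl, rfl, Sym2.mem_map.mpr ⟨x, hm, rfl⟩⟩

/-- generic: a self-map with adjacency preservation both ways and a left inverse preserves dist -/
lemma dist_map_eq {W : Type*} {T : SimpleGraph W} (f finv : W → W)
    (hf : ∀ a b, T.Adj a b → T.Adj (f a) (f b))
    (hfi : ∀ a b, T.Adj a b → T.Adj (finv a) (finv b))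
    (hinv : ∀ a, finv (f a) = a) (a b : W) : T.dist (f a) (f b) = T.dist a b := by
  let φ : T →g T := ⟨f, fun h => hf _ _ h⟩
  let φ' : T →g T := ⟨finv, fun h => hfi _ _ h⟩
  by_cases hr : T.Reachable a b
  · apply le_antisymm
    · obtain ⟨p, hp⟩ := hr.exists_walk_length_eq_dist
      calc T.dist (f a) (f b) ≤ (p.map φ).length := SimpleGraph.dist_le _
        _ = T.dist a b := by rw [Walk.length_map, hp]
    · have hr' : T.Reachable (f a) (f b) := by
        obtain ⟨p⟩ := hr
        exact ⟨p.map φ⟩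
      obtain ⟨p, hp⟩ := hr'.exists_walk_length_eq_dist
      calc T.dist a b ≤ ((p.map φ').copy (hinv a) (hinv b)).length := SimpleGraph.dist_le _
        _ = T.dist (f a) (f b) := by rw [Walk.length_copy, Walk.length_map, hp]
  · have hr' : ¬ T.Reachable (f a) (f b) := by
      intro hcon
      obtain ⟨p⟩ := hcon
      exact hr ⟨(p.map φ').copy (hinv a) (hinv b)⟩
    rw [SimpleGraph.dist_eq_zero_of_not_reachable hr,
      SimpleGraph.dist_eq_zero_of_not_reachable hr']

lemma smap_dist (hA : IsGraphAction S G) (g : G) (z w : V ⊕ S.edgeSet) :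
    (subdiv S).dist (smap hA g z) (smap hA g w) = (subdiv S).dist z w :=
  dist_map_eq (smap hA g) (smap hA g⁻¹) (fun _ _ h => smap_adj hA g h)
    (fun _ _ h => smap_adj hA g⁻¹ h) (smap_cancel' hA g) z w

lemma smul_dist (hA : IsGraphAction S G) (g : G) (a b : V) :
    S.dist (g • a) (g • b) = S.dist a b :=
  dist_map_eq (g • ·) (g⁻¹ • ·) (fun _ _ h => (hA g _ _).mpr h)
    (fun _ _ h => (hA g⁻¹ _ _).mpr h) (fun a => inv_smul_smul g a) a b

lemma smap_adj_iff (hA : IsGraphAction S G) (g : G) {z w : V ⊕ S.edgeSet} :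
    (subdiv S).Adj (smap hA g z) (smap hA g w) ↔ (subdiv S).Adj z w := by
  constructor
  · intro h
    have := smap_adj hA g⁻¹ h
    rwa [smap_cancel' hA g z, smap_cancel' hA g w] at this
  · exact smap_adj hA g

end Action

section Trans
variable {V : Type*} {S : SimpleGraph V} {G : Type*} [Group G] [MulAction G V]

lemma edge_trans (hc : S.Connected) (hA : IsGraphAction S G)
    (hstep : ∀ (y : V) (e f : S.edgeSet), y ∈ (e : Sym2 V) → y ∈ (f : Sym2 V) →
      ∃ g : G, emap hA g e = f) :
    ∀ e f : S.edgeSet, ∃ g : G, emap hA g e = f := by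
  have key : ∀ (a b : V) (w : S.Walk a b) (e f : S.edgeSet),
      a ∈ (e : Sym2 V) → b ∈ (f : Sym2 V) → ∃ g : G, emap hA g e = f := by
    intro a b w
    induction w with
    | nil => exact fun e f ha hb => hstep _ e f ha hb
    | cons h w ih =>
      rename_i a1 c1 d1
      intro e f ha hb
      obtain ⟨g1, hg1⟩ := hstep a1 e ⟨s(a1,c1), (S.mem_edgeSet).mpr h⟩ ha (by simp)
      obtain ⟨g2, hg2⟩ := ih ⟨s(a1,c1), (S.mem_edgeSet).mpr h⟩ f (by simp) hb
      refine ⟨g2 * g1, ?_⟩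
      rw [emap_mul, hg1, hg2]
  intro e f
  obtain ⟨u, v, hu, rfl⟩ := edge_endpoints e
  obtain ⟨p, q, hp, rfl⟩ := edge_endpoints f
  obtain ⟨w⟩ := hc.preconnected u p
  exact key u p w _ _ (by simp) (by simp)

end Trans

section Dists
variable {V : Type*} {S : SimpleGraph V}

lemma geodesic_getVert (hc : S.Connected) {a b : V} (W : S.Walk a b)
    (hW : W.length = S.dist a b) :
    ∀ i j, i ≤ j → j ≤ W.length → S.dist (W.getVert i) (W.getVert j) = j - i := by
  have hchain : ∀ i j, i ≤ j → j ≤ W.length → S.dist (W.getVert i) (W.getVert j) ≤ j - i := by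
    intro i j hij hj
    have := chain_dist (fun m => W.getVert (i + m)) (j - i) (fun m hm => by
      have h1 : i + m < W.length := by omega
      have := W.adj_getVert_succ h1
      simpa [Nat.add_assoc] using this)
    simpa [Nat.add_sub_cancel' hij] using this
  intro i j hij hj
  refine le_antisymm (hchain i j hij hj) ?_
  by_contra hlt
  push_neg at hlt
  have h0i : S.dist a (W.getVert i) ≤ i := by
    have := hchain 0 i (Nat.zero_le _) (le_trans hij hj)
    simpa [W.getVert_zero] using this
  have hjl : S.dist (W.getVert j) b ≤ W.length - j := by
    have := hchain j W.length hj le_rfl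
    simpa [W.getVert_length] using this
  have t1 : S.dist a b ≤ S.dist a (W.getVert j) + S.dist (W.getVert j) b :=
    hc.dist_triangle
  have t2 : S.dist a (W.getVert j) ≤ S.dist a (W.getVert i) +
      S.dist (W.getVert i) (W.getVert j) := hc.dist_triangle
  omega

lemma cycle_dist (hc : S.Connected) {c : ℕ} (hc3 : 3 ≤ c) (x : ℕ → V)
    (hadj : ∀ j, j < c → S.Adj (x j) (x (j+1)))
    (hinj : ∀ i j, i < c → j < c → x i = x j → i = j)
    (hper : x c = x 0)
    (hmin : ∀ (a : V) (w : S.Walk a a), w.IsCycle → c ≤ w.length) :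
    ∀ i j, i ≤ j → j ≤ c → S.dist (x i) (x j) = min (j - i) (c - (j - i)) := by
  intro i j hij hjc
  have hub1 : S.dist (x i) (x j) ≤ j - i := by
    have := chain_dist (fun m => x (i + m)) (j - i) (fun m hm => by
      have : i + m < c := by omega
      simpa [Nat.add_assoc] using hadj (i + m) this)
    simpa [Nat.add_sub_cancel' hij] using this
  have hub2 : S.dist (x i) (x j) ≤ c - (j - i) := by
    obtain ⟨w1, hw1, _⟩ := chain_walk_support (fun m => x (j + m)) (c - j) (fun m hm => by
      have : j + m < c := by omega
      simpa [Nat.add_assoc] using hadj (j + m) this)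
    obtain ⟨w2, hw2, _⟩ := chain_walk_support x i (fun m hm => hadj m (by omega))
    have hcast : x (j + (c - j)) = x 0 := by
      rw [show j + (c - j) = c by omega, hper]
    have hdle : S.dist (x j) (x i) ≤ (c - j) + i := by
      calc S.dist (x j) (x i) ≤ ((w1.copy rfl hcast).append w2).length :=
            SimpleGraph.dist_le _
        _ = (c - j) + i := by rw [Walk.length_append, Walk.length_copy, hw1, hw2]
    rw [SimpleGraph.dist_comm]
    omega
  rcases Nat.eq_or_lt_of_le hij with heq | hlt'
  · obtain rfl := heq
    simp [SimpleGraph.dist_self]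
  by_cases hrc : j - i = c
  · have hi0 : i = 0 := by omega
    have hjc' : j = c := by omega
    subst hi0; subst hjc'
    rw [hper]
    simp [SimpleGraph.dist_self]
  have hr1 : 1 ≤ j - i := by omega
  have hrc' : j - i ≤ c - 1 := by omega
  refine le_antisymm (le_min hub1 hub2) ?_
  by_contra hlt
  push_neg at hlt
  have hinj2 : ∀ m1 m2, m1 ≤ j - i → m2 ≤ j - i → x (i + m1) = x (i + m2) → m1 = m2 := by
    intro m1 m2 hm1 hm2 heq2
    rcases Nat.lt_or_ge (i + m1) c with h1 | h1
    · rcases Nat.lt_or_ge (i + m2) c with h2 | h2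
      · have := hinj _ _ h1 h2 heq2; omega
      · have h2c : i + m2 = c := by omega
        have hx0 : x (i + m1) = x 0 := by rw [heq2, h2c, hper]
        have := hinj _ _ h1 (by omega : 0 < c) hx0
        omega
    · have h1c : i + m1 = c := by omega
      rcases Nat.lt_or_ge (i + m2) c with h2 | h2
      · have hx0 : x (i + m2) = x 0 := by rw [← heq2, h1c, hper]
        have := hinj _ _ h2 (by omega : 0 < c) hx0
        omega
      · omega
  obtain ⟨P, hPpath, hPlen, hPsup⟩ := chain_path (fun m => x (i + m)) (j - i)
    (fun m hm => by
      have : i + m < c := by omega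
      simpa [Nat.add_assoc] using hadj (i + m) this)
    hinj2
  have hP0 : x (i + 0) = x i := by norm_num
  have hPr : x (i + (j - i)) = x j := by rw [show i + (j - i) = j by omega]
  obtain ⟨Q, hQpath, hQlen⟩ := hc.exists_path_of_dist (x i) (x j)
  have hP'path : (P.copy hP0 hPr).IsPath := by simpa using hPpath
  have hP'len : (P.copy hP0 hPr).length = j - i := by simpa using hPlen
  have hPQ : P.copy hP0 hPr ≠ Q := by
    intro hcon
    rw [← hcon] at hQlen
    rw [hP'len] at hQlen
    omega
  obtain ⟨a, w, hw, hwl⟩ := cycle_of_two_paths (P.copy hP0 hPr) Q hP'path hQpath hPQ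
  have := hmin a w hw
  rw [hP'len, hQlen] at hwl
  omega

end Dists

/-- If `S` is connected of diameter `d ≥ 2`, `2t ≤ 2d - 1`, and the subdivision graph is
locally `(G, 2t)`-distance transitive, then the girth of `S` is at least `2t + 2`. -/
theorem stmt_15 {V : Type*} [Fintype V] {G : Type*} [Group G] [MulAction G V]
    (S : SimpleGraph V) (hconn : S.Connected) (hV : Nontrivial V) (hA : IsGraphAction S G)
    (t : ℕ) (ht : 1 ≤ t) (hd : 2 ≤ S.diam) (hts : 2 * t ≤ 2 * S.diam - 1)
    (hloc : (∀ (α a b : V ⊕ S.edgeSet) (i : ℕ), 1 ≤ i → i ≤ 2 * t →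
        (subdiv S).dist α a = i → (subdiv S).dist α b = i →
        ∃ g : G, smap hA g α = α ∧ smap hA g a = b) ∧
      ∃ α a : V ⊕ S.edgeSet, (subdiv S).dist α a = 2 * t) :
    (2 * t + 2 : ℕ∞) ≤ S.egirth := by
  classical
  by_contra hcon
  rw [SimpleGraph.le_egirth] at hcon
  push_neg at hcon
  obtain ⟨a0, w0, hw0, hw0len⟩ := hcon
  have hw0len' : w0.length ≤ 2 * t + 1 := by
    have : (w0.length : ℕ∞) < ((2 * t + 2 : ℕ) : ℕ∞) := by exact_mod_cast hw0len
    have := (Nat.cast_lt (α := ℕ∞)).mp this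
    omega
  -- minimal cycle length c
  have hex : ∃ n, ∃ (a : V) (w : S.Walk a a), w.IsCycle ∧ w.length = n :=
    ⟨w0.length, a0, w0, hw0, rfl⟩
  set c := Nat.find hex with hcdef
  obtain ⟨av, wv, hwv, hwvlen⟩ := Nat.find_spec hex
  rw [← hcdef] at hwvlen
  have hcle : c ≤ 2 * t + 1 := le_trans (Nat.find_min' hex ⟨a0, w0, hw0, rfl⟩) hw0len'
  have hmin : ∀ (a : V) (w : S.Walk a a), w.IsCycle → c ≤ w.length := by
    intro a w hw
    by_contra hlt
    push_neg at hlt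
    exact Nat.find_min hex hlt ⟨a, w, hw, rfl⟩
  have hc3 : 3 ≤ c := hwvlen ▸ hwv.three_le_length
  -- cycle vertex labeling and injectivity
  have hx0adj : ∀ j, j < c → S.Adj (wv.getVert j) (wv.getVert (j+1)) := by
    intro j hj
    exact wv.adj_getVert_succ (by omega)
  have hx0per : wv.getVert c = wv.getVert 0 := by
    rw [← hwvlen, Walk.getVert_length, Walk.getVert_zero]
  have hsupnd := hwv.support_nodup
  have hsup : wv.support = (List.range (c+1)).map wv.getVert := by
    rw [support_eq_getVert, hwvlen]
  rw [hsup, List.range_succ_eq_map, List.map_cons, List.map_map] at hsupnd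
  simp only [List.tail_cons] at hsupnd
  have hinjS := List.inj_on_of_nodup_map hsupnd
  have hI : ∀ i j, 1 ≤ i → i ≤ c → 1 ≤ j → j ≤ c → wv.getVert i = wv.getVert j → i = j := by
    intro i j h1 h2 h3 h4 he
    have := hinjS (List.mem_range.mpr (show i - 1 < c by omega))
      (List.mem_range.mpr (show j - 1 < c by omega))
      (by
        have e1 : Nat.succ (i-1) = i := by omega
        have e2 : Nat.succ (j-1) = j := by omega
        simp only [Function.comp_apply, e1, e2]
        exact he)
    omega
  have hx0inj : ∀ i j, i < c → j < c → wv.getVert i = wv.getVert j → i = j := by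
    intro i j hi hj he
    rcases Nat.eq_zero_or_pos i with rfl | hip
    · rcases Nat.eq_zero_or_pos j with rfl | hjp
      · rfl
      · have hcj : wv.getVert c = wv.getVert j := by rw [hx0per]; exact he
        have := hI c j (by omega) le_rfl (by omega) (by omega) hcj
        omega
    · rcases Nat.eq_zero_or_pos j with rfl | hjp
      · have hic : wv.getVert i = wv.getVert c := by rw [hx0per]; exact he
        have := hI i c (by omega) (by omega) (by omega) le_rfl hic
        omega
      · exact hI i j (by omega) (by omega) (by omega) (by omega) he
  -- diametral geodesic
  have hNV : Nonempty V := inferInstance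
  obtain ⟨u0, v0, hdiam⟩ := exists_dist_eq_diam (G := S)
  obtain ⟨Wd, hWd⟩ := hconn.exists_walk_length_eq_dist u0 v0
  set y : ℕ → V := Wd.getVert with hy
  have hWdlen : Wd.length = S.diam := by rw [hWd, hdiam]
  have hydist : ∀ i j, i ≤ j → j ≤ S.diam → S.dist (y i) (y j) = j - i := by
    intro i j hij hj
    exact geodesic_getVert hconn Wd hWd i j hij (by omega)
  have hyadj : ∀ i, i < S.diam → S.Adj (y i) (y (i+1)) := by
    intro i hi
    exact Wd.adj_getVert_succ (by omega)
  have htd : t + 1 ≤ S.diam := by omega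
  set k := c / 2 with hk
  have hkt : k ≤ t := by omega
  have hk1d : k + 1 ≤ S.diam := by omega
  -- base edge on the geodesic
  have hadj01 : S.Adj (y 0) (y 1) := hyadj 0 (by omega)
  set e0 : S.edgeSet := ⟨s(y 0, y 1), (S.mem_edgeSet).mpr hadj01⟩ with he0
  set α : V ⊕ S.edgeSet := Sum.inr e0 with hα
  -- step transitivity
  have hstep : ∀ (z : V) (e f : S.edgeSet), z ∈ (e : Sym2 V) → z ∈ (f : Sym2 V) →
      ∃ g : G, emap hA g e = f := by
    intro z e f hze hzf
    by_cases hef : e = f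
    · exact ⟨1, by rw [emap_one, hef]⟩
    · have h1 : (subdiv S).dist (Sum.inl z) (Sum.inr e) = 1 :=
        (SimpleGraph.dist_eq_one_iff_adj).mpr (subdiv_adj_inl_inr.mpr hze)
      have h2 : (subdiv S).dist (Sum.inl z) (Sum.inr f) = 1 :=
        (SimpleGraph.dist_eq_one_iff_adj).mpr (subdiv_adj_inl_inr.mpr hzf)
      obtain ⟨g, -, hg2⟩ := hloc.1 (Sum.inl z) (Sum.inr e) (Sum.inr f) 1 le_rfl (by omega) h1 h2
      simp only [smap, Sum.map_inr] at hg2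
      exact ⟨g, Sum.inr.inj hg2⟩
  -- move the cycle so that its first edge is e0
  have heCadj : S.Adj (wv.getVert 0) (wv.getVert 1) := hx0adj 0 (by omega)
  obtain ⟨gm, hgm⟩ := edge_trans hconn hA hstep ⟨s(wv.getVert 0, wv.getVert 1),
    (S.mem_edgeSet).mpr heCadj⟩ e0
  set x : ℕ → V := fun j => gm • wv.getVert j with hxdef
  have hxadj : ∀ j, j < c → S.Adj (x j) (x (j+1)) := fun j hj => (hA gm _ _).mpr (hx0adj j hj)
  have hxinj : ∀ i j, i < c → j < c → x i = x j → i = j := by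
    intro i j hi hj he
    exact hx0inj i j hi hj (MulAction.injective gm he)
  have hxper : x c = x 0 := by
    simp only [hxdef, hx0per]
  have hpairs : s(x 0, x 1) = s(y 0, y 1) := by
    have := congrArg Subtype.val hgm
    simp only [emap, Sym2.map_pair_eq] at this
    exact this
  have cd := cycle_dist hconn hc3 x hxadj hxinj hxper hmin
  have hminX : ∀ z : V, min (S.dist (y 0) z) (S.dist (y 1) z) =
      min (S.dist (x 0) z) (S.dist (x 1) z) := by
    intro z
    rcases Sym2.eq_iff.mp hpairs with ⟨h1, h2⟩ | ⟨h1, h2⟩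
    · rw [← h1, ← h2]
    · rw [← h1, ← h2, min_comm]
  have hdy : ∀ z : V, (subdiv S).dist α (Sum.inl z) =
      2 * min (S.dist (y 0) z) (S.dist (y 1) z) + 1 :=
    fun z => subdiv_dist_inr_inl hconn hadj01 z
  have hdr : ∀ {p q : V} (h : S.Adj p q),
      e0 ≠ (⟨s(p,q), (S.mem_edgeSet).mpr h⟩ : S.edgeSet) →
      (subdiv S).dist α (Sum.inr ⟨s(p,q), (S.mem_edgeSet).mpr h⟩) =
        1 + min ((subdiv S).dist α (Sum.inl p)) ((subdiv S).dist α (Sum.inl q)) :=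
    fun h hne => subdiv_dist_inr_inr hconn h hne
  -- distances to geodesic vertices
  have hdyk : (subdiv S).dist α (Sum.inl (y k)) = 2 * (k - 1) + 1 := by
    rw [hdy (y k)]
    have h1 : S.dist (y 0) (y k) = k := by
      have := hydist 0 k (by omega) (by omega); omega
    have h2 : S.dist (y 1) (y k) = k - 1 := by
      have := hydist 1 k (by omega) (by omega); omega
    omega
  have hdyk1 : (subdiv S).dist α (Sum.inl (y (k+1))) = 2 * k + 1 := by
    rw [hdy (y (k+1))]
    have h1 : S.dist (y 0) (y (k+1)) = k + 1 := by
      have := hydist 0 (k+1) (by omega) (by omega); omega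
    have h2 : S.dist (y 1) (y (k+1)) = k := by
      have := hydist 1 (k+1) (by omega) (by omega); omega
    omega
  -- the geodesic edge b
  have hbadj : S.Adj (y k) (y (k+1)) := hyadj k (by omega)
  set bE : S.edgeSet := ⟨s(y k, y (k+1)), (S.mem_edgeSet).mpr hbadj⟩ with hbE
  have hbne : e0 ≠ bE := by
    intro hcon2
    have := congrArg Subtype.val hcon2
    simp only [he0, hbE] at this
    rcases Sym2.eq_iff.mp this with ⟨h1, h2⟩ | ⟨h1, h2⟩
    · have := hydist 0 k (by omega) (by omega)
      rw [← h1, SimpleGraph.dist_self] at this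
      omega
    · have := hydist 0 (k+1) (by omega) (by omega)
      rw [← h1, SimpleGraph.dist_self] at this
      omega
  have hdb : (subdiv S).dist α (Sum.inr bE) = 2 * k := by
    rw [hbE, hdr hbadj (by rw [← hbE]; exact hbne), hdyk, hdyk1]
    omega
  -- parity split
  have hk1 : 1 ≤ k := by omega
  have hpar : c = 2 * k ∨ c = 2 * k + 1 := by omega
  rcases hpar with hceq | hceq
  · -- EVEN CASE: c = 2k, k ≥ 2
    have hk2 : 2 ≤ k := by omega
    have hdxk : (subdiv S).dist α (Sum.inl (x k)) = 2 * (k - 1) + 1 := by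
      rw [hdy (x k), hminX (x k)]
      have h1 := cd 0 k (by omega) (by omega)
      have h2 := cd 1 k (by omega) (by omega)
      omega
    have hdxk1 : (subdiv S).dist α (Sum.inl (x (k+1))) = 2 * (k - 1) + 1 := by
      rw [hdy (x (k+1)), hminX (x (k+1))]
      have h1 := cd 0 (k+1) (by omega) (by omega)
      have h2 := cd 1 (k+1) (by omega) (by omega)
      omega
    have haadj : S.Adj (x k) (x (k+1)) := hxadj k (by omega)
    set aE : S.edgeSet := ⟨s(x k, x (k+1)), (S.mem_edgeSet).mpr haadj⟩ with haE
    have hane : e0 ≠ aE := by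
      intro hcon2
      have h' : s(x 0, x 1) = s(x k, x (k+1)) := by
        rw [hpairs]
        exact congrArg Subtype.val hcon2
      rcases Sym2.eq_iff.mp h' with ⟨h1, h2⟩ | ⟨h1, h2⟩
      · have := hxinj 0 k (by omega) (by omega) h1; omega
      · have := hxinj 0 (k+1) (by omega) (by omega) h1; omega
    have hda : (subdiv S).dist α (Sum.inr aE) = 2 * k := by
      rw [haE, hdr haadj (by rw [← haE]; exact hane), hdxk, hdxk1]
      omega
    obtain ⟨g2, hfix, hmap⟩ := hloc.1 α (Sum.inr aE) (Sum.inr bE) (2*k) (by omega)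
      (by omega) hda hdb
    set β := smap hA g2⁻¹ (Sum.inl (y (k+1))) with hβ
    have hb_adj_y : (subdiv S).Adj (Sum.inl (y (k+1))) (Sum.inr bE) :=
      subdiv_adj_inl_inr.mpr (by rw [hbE]; simp)
    have hβa : (subdiv S).Adj β (Sum.inr aE) := by
      have h2 := smap_adj hA g2⁻¹ hb_adj_y
      rw [← hmap, smap_cancel' hA g2] at h2
      exact h2
    have hdβ : (subdiv S).dist α β = 2 * k + 1 := by
      have h1 := smap_dist hA g2 α β
      rw [hfix, hβ, smap_cancel hA g2] at h1
      rw [← h1]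
      exact hdyk1
    obtain ⟨z, hz1, hz2⟩ := subdiv_adj_inr hβa.symm
    rw [haE] at hz2
    have hz3 : z = x k ∨ z = x (k+1) := by simpa using hz2
    rw [hz1] at hdβ
    rcases hz3 with rfl | rfl
    · rw [hdxk] at hdβ; omega
    · rw [hdxk1] at hdβ; omega
  · -- ODD CASE: c = 2k+1, k ≥ 1
    have hdxk : (subdiv S).dist α (Sum.inl (x k)) = 2 * (k - 1) + 1 := by
      rw [hdy (x k), hminX (x k)]
      have h1 := cd 0 k (by omega) (by omega)
      have h2 := cd 1 k (by omega) (by omega)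
      omega
    have hdxk1 : (subdiv S).dist α (Sum.inl (x (k+1))) = 2 * k + 1 := by
      rw [hdy (x (k+1)), hminX (x (k+1))]
      have h1 := cd 0 (k+1) (by omega) (by omega)
      have h2 := cd 1 (k+1) (by omega) (by omega)
      omega
    have hdxk2 : (subdiv S).dist α (Sum.inl (x (k+2))) = 2 * (k - 1) + 1 := by
      rw [hdy (x (k+2)), hminX (x (k+2))]
      have h1 := cd 0 (k+2) (by omega) (by omega)
      have h2 := cd 1 (k+2) (by omega) (by omega)
      omega
    have haadj : S.Adj (x k) (x (k+1)) := hxadj k (by omega)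
    set aE : S.edgeSet := ⟨s(x k, x (k+1)), (S.mem_edgeSet).mpr haadj⟩ with haE
    have hane : e0 ≠ aE := by
      intro hcon2
      have h' : s(x 0, x 1) = s(x k, x (k+1)) := by
        rw [hpairs]
        exact congrArg Subtype.val hcon2
      rcases Sym2.eq_iff.mp h' with ⟨h1, h2⟩ | ⟨h1, h2⟩
      · have := hxinj 0 k (by omega) (by omega) h1; omega
      · have := hxinj 0 (k+1) (by omega) (by omega) h1; omega
    have hda : (subdiv S).dist α (Sum.inr aE) = 2 * k := by
      rw [haE, hdr haadj (by rw [← haE]; exact hane), hdxk, hdxk1]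
      omega
    have ha2adj : S.Adj (x (k+1)) (x (k+2)) := hxadj (k+1) (by omega)
    set a2E : S.edgeSet := ⟨s(x (k+1), x (k+2)), (S.mem_edgeSet).mpr ha2adj⟩ with ha2E
    have ha2ne : e0 ≠ a2E := by
      intro hcon2
      have h' : s(x 0, x 1) = s(x (k+1), x (k+2)) := by
        rw [hpairs]
        exact congrArg Subtype.val hcon2
      rcases Sym2.eq_iff.mp h' with ⟨h1, h2⟩ | ⟨h1, h2⟩
      · have := hxinj 0 (k+1) (by omega) (by omega) h1; omega
      · have := hxinj 1 (k+1) (by omega) (by omega) h2; omega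
    have hda2 : (subdiv S).dist α (Sum.inr a2E) = 2 * k := by
      rw [ha2E, hdr ha2adj (by rw [← ha2E]; exact ha2ne), hdxk1, hdxk2]
      omega
    have haa2 : aE ≠ a2E := by
      intro hcon2
      have h' := congrArg Subtype.val hcon2
      simp only [haE, ha2E] at h'
      rcases Sym2.eq_iff.mp h' with ⟨h1, h2⟩ | ⟨h1, h2⟩
      · have := hxinj k (k+1) (by omega) (by omega) h1; omega
      · by_cases hkc : k + 2 = c
        · have hx22 : x (k+2) = x 0 := by rw [hkc]; exact hxper
          rw [hx22] at h1
          have := hxinj k 0 (by omega) (by omega) h1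
          omega
        · have := hxinj k (k+2) (by omega) (by omega) h1; omega
    obtain ⟨g2, hfix, hmap⟩ := hloc.1 α (Sum.inr aE) (Sum.inr bE) (2*k) (by omega)
      (by omega) hda hdb
    set β' := smap hA g2 (Sum.inl (x (k+1))) with hβ'
    have hβ_adj_a : (subdiv S).Adj (Sum.inl (x (k+1))) (Sum.inr aE) :=
      subdiv_adj_inl_inr.mpr (by rw [haE]; simp)
    have hβ_adj_a2 : (subdiv S).Adj (Sum.inl (x (k+1))) (Sum.inr a2E) :=
      subdiv_adj_inl_inr.mpr (by rw [ha2E]; simp)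
    have hβ'b : (subdiv S).Adj β' (Sum.inr bE) := by
      have h2 := smap_adj hA g2 hβ_adj_a
      rw [hmap] at h2
      exact h2
    have hdβ' : (subdiv S).dist α β' = 2 * k + 1 := by
      have h1 := smap_dist hA g2 α (Sum.inl (x (k+1)))
      rw [hfix] at h1
      rw [hβ', h1]
      exact hdxk1
    -- identify β' = inl (y (k+1))
    obtain ⟨z0, hz01, hz02⟩ := subdiv_adj_inr hβ'b.symm
    rw [hbE] at hz02
    have hz03 : z0 = y k ∨ z0 = y (k+1) := by simpa using hz02
    have hβ'eq : β' = Sum.inl (y (k+1)) := by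
      rcases hz03 with rfl | rfl
      · rw [hz01, hdyk] at hdβ'
        omega
      · exact hz01
    -- the second edge image
    set a2' := smap hA g2 (Sum.inr a2E) with ha2'
    have hβ'a2' : (subdiv S).Adj β' a2' := by
      have h2 := smap_adj hA g2 hβ_adj_a2
      exact h2
    have hda2' : (subdiv S).dist α a2' = 2 * k := by
      have h1 := smap_dist hA g2 α (Sum.inr a2E)
      rw [hfix] at h1
      rw [ha2', h1]
      exact hda2
    have ha2'b : a2' ≠ Sum.inr bE := by
      intro hcon2
      rw [← hmap] at hcon2
      have := congrArg (smap hA g2⁻¹) hcon2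
      rw [ha2', smap_cancel' hA g2, smap_cancel' hA g2] at this
      exact haa2 (Sum.inr.inj this).symm
    -- a2' is an edge containing y (k+1)
    rw [hβ'eq] at hβ'a2'
    obtain ⟨f, hf1, hf2⟩ := subdiv_adj_inl hβ'a2'
    obtain ⟨z, hz⟩ := Sym2.mem_iff_exists.mp hf2
    have hz_adj : S.Adj (y (k+1)) z := by
      have := f.2
      rw [hz] at this
      exact (S.mem_edgeSet).mp this
    have hfeq : f = ⟨s(y (k+1), z), (S.mem_edgeSet).mpr hz_adj⟩ := Subtype.ext hz
    have hfne : e0 ≠ (⟨s(y (k+1), z), (S.mem_edgeSet).mpr hz_adj⟩ : S.edgeSet) := by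
      intro hcon2
      have h' := congrArg Subtype.val hcon2
      simp only [he0] at h'
      rcases Sym2.eq_iff.mp h' with ⟨h1, h2⟩ | ⟨h1, h2⟩
      · have := hydist 0 (k+1) (by omega) (by omega)
        rw [← h1, SimpleGraph.dist_self] at this
        omega
      · have := hydist 1 (k+1) (by omega) (by omega)
        rw [← h2, SimpleGraph.dist_self] at this
        omega
    rw [hf1] at hda2' ha2'b
    rw [hfeq] at hda2' ha2'b
    have hdf := hdr hz_adj hfne
    rw [hda2', hdyk1, hdy z] at hdf
    have hDz : min (S.dist (y 0) z) (S.dist (y 1) z) = k - 1 := by omega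
    have hzyk : z ≠ y k := by
      intro hzk
      apply ha2'b
      congr 1
      apply Subtype.ext
      show s(y (k+1), z) = s(y k, y (k+1))
      rw [hzk]
      exact Sym2.eq_swap
    have hdz1 : S.dist (y (k+1)) z = 1 := (SimpleGraph.dist_eq_one_iff_adj).mpr hz_adj
    rcases (by omega : S.dist (y 0) z = k - 1 ∨ S.dist (y 1) z = k - 1) with hcase | hcase
    · -- contradiction with d(y0, y(k+1)) = k+1
      have htri : S.dist (y 0) (y (k+1)) ≤ S.dist (y 0) z + S.dist z (y (k+1)) :=
        hconn.dist_triangle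
      have h1 : S.dist (y 0) (y (k+1)) = k + 1 := by
        have := hydist 0 (k+1) (by omega) (by omega); omega
      rw [SimpleGraph.dist_comm] at hdz1
      omega
    · -- two distinct paths of length k from y 1 to y (k+1): short cycle
      have hPinj : ∀ m1 m2, m1 ≤ k → m2 ≤ k → y (1 + m1) = y (1 + m2) → m1 = m2 := by
        intro m1 m2 hm1 hm2 heq2
        have d1 := hydist 1 (1 + m1) (by omega) (by omega)
        have d2 := hydist 1 (1 + m2) (by omega) (by omega)
        rw [heq2] at d1
        omega
      obtain ⟨P, hPpath, hPlen, hPsup⟩ := chain_path (fun m => y (1 + m)) k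
        (fun m hm => by
          have := hyadj (1 + m) (by omega)
          simpa [Nat.add_assoc] using this)
        hPinj
      have hc1 : y (1 + 0) = y 1 := by norm_num
      have hc2 : y (1 + k) = y (k + 1) := by rw [Nat.add_comm]
      obtain ⟨Q0, hQ0path, hQ0len⟩ := hconn.exists_path_of_dist (y 1) z
      have hQ0sup : ∀ v ∈ Q0.support, S.dist (y 1) v ≤ k - 1 := by
        intro v hv
        calc S.dist (y 1) v ≤ (Q0.takeUntil v hv).length := SimpleGraph.dist_le _
          _ ≤ Q0.length := Walk.length_takeUntil_le Q0 hv
          _ = k - 1 := by rw [hQ0len, hcase]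
      have hyk1Q0 : y (k+1) ∉ Q0.support := by
        intro hmem
        have h1 := hQ0sup _ hmem
        have h2 : S.dist (y 1) (y (k+1)) = k := by
          have := hydist 1 (k+1) (by omega) (by omega); omega
        omega
      set Q : S.Walk (y 1) (y (k+1)) := Q0.concat hz_adj.symm with hQ
      have hQpath : Q.IsPath := by
        apply Walk.IsPath.mk'
        rw [hQ, Walk.support_concat]
        refine List.Nodup.append hQ0path.support_nodup (List.nodup_singleton _) ?_
        intro v hv1 hv2
        simp only [List.mem_singleton] at hv2
        subst hv2
        exact hyk1Q0 hv1
      have hQlen : Q.length = k := by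
        rw [hQ, Walk.length_concat, hQ0len, hcase]
        omega
      have hzQ : z ∈ Q.support := by
        rw [hQ, Walk.support_concat]
        simp only [List.concat_eq_append, List.mem_append]
        exact Or.inl Q0.end_mem_support
      have hzP : z ∉ (P.copy hc1 hc2).support := by
        rw [Walk.support_copy]
        intro hmem
        obtain ⟨i, hik, hiz⟩ := (hPsup z).mp hmem
        have := hydist 1 (1 + i) (by omega) (by omega)
        rw [hiz] at this
        rw [hcase] at this
        have hik' : i = k - 1 := by omega
        apply hzyk
        rw [← hiz, hik']
        congr 1
        omega
      have hPQ : P.copy hc1 hc2 ≠ Q := by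
        intro hcon2
        rw [hcon2] at hzP
        exact hzP hzQ
      have hPcopylen : (P.copy hc1 hc2).length = k := by simpa using hPlen
      have hPcopypath : (P.copy hc1 hc2).IsPath := by simpa using hPpath
      obtain ⟨ac, wc, hwc, hwcl⟩ := cycle_of_two_paths (P.copy hc1 hc2) Q hPcopypath
        hQpath hPQ
      have := hmin ac wc hwc
      rw [hPcopylen, hQlen] at hwcl
      omega
end
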